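/- arXiv:math/0209214 — 3 statements merged into one kernel-verified Lean document; each statement's English description precedes it below -/
import Mathlib

section
/- Let Γ be the group with presentation ⟨a, b | a³ = b⁴ = (ab²)² = 1⟩. Then Γ is isomorphic to the amalgamated free product S₃ *_{C₂} C₄, where S₃ is generated by {a, b²} and C₄ by b. -/
open Equiv

/-- The relations `a³ = b⁴ = (ab²)² = 1` of the group `Γ`. -/
def gammaRels : Set (FreeGroup (Fin 2)) :=
  {FreeGroup.of 0 ^ 3, FreeGroup.of 1 ^ 4,
    (FreeGroup.of 0 * FreeGroup.of 1 ^ 2) ^ 2}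

/-- The two factors of the amalgam `S₃ *_{C₂} C₄`: `S₃` (indexed by `true`)
and the cyclic group `C₄` of order 4 (indexed by `false`). -/
def AmalgamFactor : Bool → Type
  | true => Equiv.Perm (Fin 3)
  | false => Multiplicative (ZMod 4)

instance : ∀ i, Group (AmalgamFactor i) := fun i => by
  cases i <;> (unfold AmalgamFactor; infer_instance)

/-- The embedding of `C₂` into `S₃` sending the generator to the
order-2 element `y = (0 1)`. -/
def c2ToS3 : Multiplicative (ZMod 2) →* Equiv.Perm (Fin 3) where
  toFun x := Equiv.swap 0 1 ^ (Multiplicative.toAdd x).val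
  map_one' := by decide
  map_mul' := by decide

/-- The embedding of `C₂` into `C₄` sending the generator to the square of
the generator of `C₄`. -/
def c2ToC4 : Multiplicative (ZMod 2) →* Multiplicative (ZMod 4) :=
  AddMonoidHom.toMultiplicative
    { toFun := fun x => (2 * x.val : ZMod 4)
      map_zero' := by decide
      map_add' := by decide }

/-- The amalgamation data for `S₃ *_{C₂} C₄`: the common subgroup `C₂`
is embedded as `⟨(0 1)⟩ ≤ S₃` and as the unique order-2 subgroup of `C₄`. -/
def amalgamMap : ∀ i : Bool, Multiplicative (ZMod 2) →* AmalgamFactor i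
  | true => c2ToS3
  | false => c2ToC4

section Cyclic
variable {G : Type*} [Group G]

lemma pow_mod_eq {B : G} {n : ℕ} (hB : B ^ n = 1) (m : ℕ) : B ^ (m % n) = B ^ m := by
  conv_rhs => rw [← Nat.div_add_mod m n]
  rw [pow_add, pow_mul, hB, one_pow, one_mul]

def zmodHom (n : ℕ) [NeZero n] (B : G) (hB : B ^ n = 1) : Multiplicative (ZMod n) →* G where
  toFun x := B ^ (Multiplicative.toAdd x).val
  map_one' := by simp [ZMod.val_zero]
  map_mul' x y := by
    show B ^ (Multiplicative.toAdd x + Multiplicative.toAdd y).val = _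
    rw [ZMod.val_add, pow_mod_eq hB, pow_add]

@[simp] lemma zmodHom_apply (n : ℕ) [NeZero n] (B : G) (hB : B ^ n = 1)
    (x : ZMod n) : zmodHom n B hB (Multiplicative.ofAdd x) = B ^ x.val := rfl

lemma mulZModHom_ext {n : ℕ} [NeZero n] {M : Type*} [Monoid M]
    {f g : Multiplicative (ZMod n) →* M}
    (h : f (Multiplicative.ofAdd 1) = g (Multiplicative.ofAdd 1)) : f = g := by
  refine MonoidHom.ext fun x => ?_
  have h1 : (Multiplicative.toAdd x).val • (1 : ZMod n) = Multiplicative.toAdd x := by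
    rw [nsmul_eq_mul, mul_one]; exact ZMod.natCast_rightInverse _
  have hx : (Multiplicative.ofAdd (1 : ZMod n)) ^ (Multiplicative.toAdd x).val = x := by
    rw [← ofAdd_nsmul, h1, ofAdd_toAdd]
  rw [← hx, map_pow, map_pow, h]
end Cyclic

section Dihedral
open DihedralGroup
variable {G : Type*} [Group G] (A T : G) (hA : A ^ 3 = 1) (hT : T ^ 2 = 1)
  (hAT : (A * T) ^ 2 = 1)

/-- `A` raised to a `ZMod 3` power. -/
def prA (i : ZMod 3) : G := A ^ i.val

variable {A T}

lemma prA_add (hA : A ^ 3 = 1) (i j : ZMod 3) : prA A (i + j) = prA A i * prA A j := by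
  unfold prA
  rw [ZMod.val_add, pow_mod_eq hA, pow_add]

lemma prA_zero : prA A 0 = 1 := by simp [prA]

lemma prA_neg (hA : A ^ 3 = 1) (i : ZMod 3) : prA A (-i) = (prA A i)⁻¹ := by
  have h := prA_add hA i (-i)
  rw [add_neg_cancel, prA_zero] at h
  exact eq_inv_of_mul_eq_one_right h.symm

lemma T_inv (hT : T ^ 2 = 1) : T⁻¹ = T := by
  have : T * T = 1 := by rw [← sq]; exact hT
  exact inv_eq_of_mul_eq_one_right this

lemma T_mul_A (hT : T ^ 2 = 1) (hAT : (A * T) ^ 2 = 1) : T * A = A⁻¹ * T := by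
  have h1 : A * (T * A * T) = 1 := by
    have := hAT; rw [sq] at this; rw [← this]; group
  have h2 : T * A * T = A⁻¹ := eq_inv_of_mul_eq_one_right h1
  have : T * A = A⁻¹ * T⁻¹ := by rw [← h2]; group
  rwa [T_inv hT] at this

lemma T_mul_prA (hT : T ^ 2 = 1) (hAT : (A * T) ^ 2 = 1) (hA : A ^ 3 = 1) (i : ZMod 3) :
    T * prA A i = prA A (-i) * T := by
  rw [prA_neg hA]
  unfold prA
  induction i.val with
  | zero => simp
  | succ n ih =>
      rw [pow_succ, ← mul_assoc, ih, mul_assoc, T_mul_A hT hAT, mul_inv_rev]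
      group

/-- The function underlying the dihedral hom. -/
def d3fun : DihedralGroup 3 → G
  | .r i => prA A i
  | .sr i => T * prA A i

/-- Hom from `DihedralGroup 3` given elements satisfying the dihedral relations. -/
def d3Hom (A T : G) (hA : A ^ 3 = 1) (hT : T ^ 2 = 1) (hAT : (A * T) ^ 2 = 1) :
    DihedralGroup 3 →* G where
  toFun := d3fun (A := A) (T := T)
  map_one' := prA_zero
  map_mul' x y := by
    rcases x with i | i <;> rcases y with j | j
    · rw [r_mul_r]
      exact prA_add hA i j
    · rw [r_mul_sr]
      show T * prA A (j - i) = prA A i * (T * prA A j)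
      have h := T_mul_prA hT hAT hA (-i)
      rw [neg_neg] at h
      rw [← mul_assoc, ← h, mul_assoc, ← prA_add hA, sub_eq_neg_add]
    · rw [sr_mul_r]
      show T * prA A (i + j) = T * prA A i * prA A j
      rw [prA_add hA, mul_assoc]
    · rw [sr_mul_sr]
      show prA A (j - i) = T * prA A i * (T * prA A j)
      rw [T_mul_prA hT hAT hA i, mul_assoc, ← mul_assoc T T, ← sq, hT, one_mul,
        ← prA_add hA, sub_eq_neg_add]

@[simp] lemma d3Hom_r (i : ZMod 3) : d3Hom A T hA hT hAT (.r i) = A ^ i.val := rfl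
@[simp] lemma d3Hom_sr (i : ZMod 3) : d3Hom A T hA hT hAT (.sr i) = T * A ^ i.val := rfl
end Dihedral

namespace Stmt0

noncomputable section
open Monoid Multiplicative DihedralGroup

abbrev Γ := PresentedGroup gammaRels

def a : Γ := PresentedGroup.of 0
def b : Γ := PresentedGroup.of 1

lemma rel_one {r : FreeGroup (Fin 2)} (h : r ∈ gammaRels) :
    PresentedGroup.mk gammaRels r = 1 :=
  (QuotientGroup.eq_one_iff r).2 (Subgroup.subset_normalClosure h)

lemma ha : a ^ 3 = 1 := by
  have : a ^ 3 = PresentedGroup.mk gammaRels (FreeGroup.of 0 ^ 3) := by rw [map_pow]; rfl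
  rw [this]; exact rel_one (by simp [gammaRels])

lemma hb : b ^ 4 = 1 := by
  have : b ^ 4 = PresentedGroup.mk gammaRels (FreeGroup.of 1 ^ 4) := by rw [map_pow]; rfl
  rw [this]; exact rel_one (by simp [gammaRels])

lemma hab : (a * b ^ 2) ^ 2 = 1 := by
  have : (a * b ^ 2) ^ 2 =
      PresentedGroup.mk gammaRels ((FreeGroup.of 0 * FreeGroup.of 1 ^ 2) ^ 2) := by
    rw [map_pow, map_mul, map_pow]; rfl
  rw [this]; exact rel_one (by simp [gammaRels])

lemma ht : (b ^ 2) ^ 2 = 1 := by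
  rw [← pow_mul]; norm_num; exact hb

/-- The hom `DihedralGroup 3 →* Perm (Fin 3)`. -/
def d3ToPerm : DihedralGroup 3 →* Perm (Fin 3) :=
  d3Hom c[0, 1, 2] (swap 0 1) (by decide) (by decide) (by decide)

/-- The iso `DihedralGroup 3 ≃* Perm (Fin 3)`. -/
noncomputable def permD3 : DihedralGroup 3 ≃* Perm (Fin 3) :=
  MulEquiv.ofBijective d3ToPerm (by decide)

lemma permD3_apply (x : DihedralGroup 3) : permD3 x = d3ToPerm x := rfl

lemma permD3_symm_cycle : permD3.symm c[0, 1, 2] = .r 1 := by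
  rw [MulEquiv.symm_apply_eq, permD3_apply]; decide

lemma permD3_symm_swap : permD3.symm (swap 0 1) = .sr 0 := by
  rw [MulEquiv.symm_apply_eq, permD3_apply]; decide

/-- The hom `S₃ →* Γ`. -/
noncomputable def s3ToGamma : Perm (Fin 3) →* Γ :=
  (d3Hom a (b ^ 2) ha ht hab).comp permD3.symm.toMonoidHom

/-- The hom `C₄ →* Γ`. -/
def c4ToGamma : Multiplicative (ZMod 4) →* Γ := zmodHom 4 b hb

/-- The hom `C₂ →* Γ`. -/
def kC2 : Multiplicative (ZMod 2) →* Γ := zmodHom 2 (b ^ 2) ht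

lemma s3ToGamma_cycle : s3ToGamma c[0, 1, 2] = a := by
  show d3Hom a (b ^ 2) ha ht hab (permD3.symm c[0, 1, 2]) = a
  rw [permD3_symm_cycle, d3Hom_r, show ((1 : ZMod 3)).val = 1 from rfl, pow_one]

lemma s3ToGamma_swap : s3ToGamma (swap 0 1) = b ^ 2 := by
  show d3Hom a (b ^ 2) ha ht hab (permD3.symm (swap 0 1)) = b ^ 2
  rw [permD3_symm_swap, d3Hom_sr, show ((0 : ZMod 3)).val = 0 from rfl, pow_zero, mul_one]

/-- The family of homs out of the factors. -/
noncomputable def fs : ∀ i : Bool, AmalgamFactor i →* Γ := fun i =>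
  Bool.rec c4ToGamma s3ToGamma i

lemma hcomm : ∀ i, (fs i).comp (amalgamMap i) = kC2 := by
  intro i
  cases i
  · apply mulZModHom_ext
    show c4ToGamma (c2ToC4 (ofAdd 1)) = kC2 (ofAdd 1)
    rw [show c2ToC4 (ofAdd (1 : ZMod 2)) = ofAdd (2 : ZMod 4) from by decide]
    show b ^ (2 : ZMod 4).val = (b ^ 2) ^ (1 : ZMod 2).val
    rw [show ((2 : ZMod 4)).val = 2 from rfl, show ((1 : ZMod 2)).val = 1 from rfl, pow_one]
  · apply mulZModHom_ext
    show s3ToGamma (c2ToS3 (ofAdd 1)) = kC2 (ofAdd 1)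
    rw [show c2ToS3 (ofAdd (1 : ZMod 2)) = swap 0 1 from by decide, s3ToGamma_swap]
    show (b ^ 2) = (b ^ 2) ^ (1 : ZMod 2).val
    rw [show ((1 : ZMod 2)).val = 1 from rfl, pow_one]

/-- The hom `S₃ *_{C₂} C₄ →* Γ`. -/
noncomputable def g : PushoutI amalgamMap →* Γ := PushoutI.lift fs kC2 hcomm

/-- The inclusion of `S₃` into the pushout, with its domain stated as `Perm (Fin 3)`. -/
def ofS3 : Perm (Fin 3) →* PushoutI amalgamMap := PushoutI.of (φ := amalgamMap) true

/-- The inclusion of `C₄` into the pushout. -/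
def ofC4 : Multiplicative (ZMod 4) →* PushoutI amalgamMap :=
  PushoutI.of (φ := amalgamMap) false

/-- The images of the generators of `Γ` in the pushout. -/
def F : Fin 2 → PushoutI amalgamMap
  | 0 => ofS3 c[0, 1, 2]
  | 1 => ofC4 (ofAdd (1 : ZMod 4))

lemma hbase : ofC4 (ofAdd (2 : ZMod 4)) = ofS3 (swap 0 1) := by
  have h1 := PushoutI.of_comp_eq_base (φ := amalgamMap) false
  have h2 := PushoutI.of_comp_eq_base (φ := amalgamMap) true
  have e1 := congrArg (fun φ => φ (ofAdd (1 : ZMod 2))) h1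
  have e2 := congrArg (fun φ => φ (ofAdd (1 : ZMod 2))) h2
  simp only [MonoidHom.comp_apply] at e1 e2
  rw [show (amalgamMap false) (ofAdd (1 : ZMod 2)) = ofAdd (2 : ZMod 4) from by
    show c2ToC4 _ = _; decide] at e1
  rw [show (amalgamMap true) (ofAdd (1 : ZMod 2)) = swap 0 1 from by
    show c2ToS3 _ = _; decide] at e2
  exact e1.trans e2.symm

lemma hrelF : ∀ r ∈ gammaRels, FreeGroup.lift F r = 1 := by
  intro r hr
  simp only [gammaRels, Set.mem_insert_iff, Set.mem_singleton_iff] at hr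
  rcases hr with rfl | rfl | rfl
  · rw [map_pow, FreeGroup.lift_apply_of]
    show ofS3 c[0, 1, 2] ^ 3 = 1
    rw [← map_pow, show (c[0, 1, 2] : Perm (Fin 3)) ^ 3 = 1 from by decide, map_one]
  · rw [map_pow, FreeGroup.lift_apply_of]
    show ofC4 (ofAdd (1 : ZMod 4)) ^ 4 = 1
    rw [← map_pow, show (ofAdd (1 : ZMod 4)) ^ 4 = 1 from by decide, map_one]
  · rw [map_pow, map_mul, map_pow, FreeGroup.lift_apply_of, FreeGroup.lift_apply_of]
    show (ofS3 c[0, 1, 2] * ofC4 (ofAdd (1 : ZMod 4)) ^ 2) ^ 2 = 1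
    rw [← map_pow, show (ofAdd (1 : ZMod 4)) ^ 2 = ofAdd (2 : ZMod 4) from by decide,
      hbase, ← map_mul, ← map_pow,
      show (c[0, 1, 2] * swap 0 1 : Perm (Fin 3)) ^ 2 = 1 from by decide, map_one]

/-- The hom `Γ →* S₃ *_{C₂} C₄`. -/
def f : Γ →* PushoutI amalgamMap := PresentedGroup.toGroup hrelF

lemma f_a : f a = ofS3 c[0, 1, 2] :=
  PresentedGroup.toGroup.of hrelF

lemma f_b : f b = ofC4 (ofAdd (1 : ZMod 4)) :=
  PresentedGroup.toGroup.of hrelF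

set_option maxHeartbeats 2000000 in
lemma g_of_true (x : Perm (Fin 3)) : g (ofS3 x) = s3ToGamma x :=
  PushoutI.lift_of fs kC2 hcomm (i := true) x

set_option maxHeartbeats 2000000 in
lemma g_of_false (x : Multiplicative (ZMod 4)) : g (ofC4 x) = c4ToGamma x :=
  PushoutI.lift_of fs kC2 hcomm (i := false) x

lemma hgf : g.comp f = MonoidHom.id Γ := by
  refine PresentedGroup.ext fun x => ?_
  fin_cases x
  · show g (f a) = a
    rw [f_a, g_of_true, s3ToGamma_cycle]
  · show g (f b) = b
    rw [f_b, g_of_false]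
    show b ^ (1 : ZMod 4).val = b
    rw [show ((1 : ZMod 4)).val = 1 from rfl, pow_one]

lemma d3_hom_ext {M : Type*} [Monoid M] {f1 f2 : DihedralGroup 3 →* M}
    (h1 : f1 (.r 1) = f2 (.r 1)) (h2 : f1 (.sr 0) = f2 (.sr 0)) : f1 = f2 := by
  ext x
  rcases x with i | i
  · have hx : (DihedralGroup.r i : DihedralGroup 3) = (.r 1) ^ i.val := by
      rw [r_one_pow]
      exact congrArg _ (ZMod.natCast_rightInverse i).symm
    rw [hx, map_pow, map_pow, h1]
  · have hx : (DihedralGroup.sr i : DihedralGroup 3) = (.sr 0) * (.r 1) ^ i.val := by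
      rw [r_one_pow, sr_mul_r, zero_add, ZMod.natCast_rightInverse]
    rw [hx, map_mul, map_mul, map_pow, map_pow, h1, h2]

lemma hfg : f.comp g = MonoidHom.id (PushoutI amalgamMap) := by
  refine PushoutI.hom_ext_nonempty fun i => ?_
  cases i
  · show (f.comp g).comp ofC4 = (MonoidHom.id _).comp ofC4
    refine mulZModHom_ext ?_
    show f (g (ofC4 (ofAdd (1 : ZMod 4)))) = ofC4 (ofAdd (1 : ZMod 4))
    rw [g_of_false]
    show f (b ^ (1 : ZMod 4).val) = _
    rw [show ((1 : ZMod 4)).val = 1 from rfl, pow_one, f_b]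
  · show (f.comp g).comp ofS3 = (MonoidHom.id _).comp ofS3
    have hsurj : Function.Surjective (d3ToPerm : DihedralGroup 3 →* Perm (Fin 3)) :=
      permD3.surjective
    refine (MonoidHom.cancel_right hsurj).1 (d3_hom_ext ?_ ?_)
    · show f (g (ofS3 (d3ToPerm (.r 1)))) = ofS3 (d3ToPerm (.r 1))
      rw [show d3ToPerm (.r 1) = c[0, 1, 2] from by decide, g_of_true, s3ToGamma_cycle, f_a]
    · show f (g (ofS3 (d3ToPerm (.sr 0)))) = ofS3 (d3ToPerm (.sr 0))
      rw [show d3ToPerm (.sr 0) = swap 0 1 from by decide, g_of_true, s3ToGamma_swap]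
      show f (b ^ 2) = _
      rw [map_pow, f_b, ← map_pow,
        show (ofAdd (1 : ZMod 4)) ^ 2 = ofAdd (2 : ZMod 4) from by decide, hbase]

end

end Stmt0

/-- The group `Γ = ⟨a, b | a³ = b⁴ = (ab²)² = 1⟩` is isomorphic to the
amalgamated free product `S₃ *_{C₂} C₄`, via an isomorphism carrying `a` to the
3-cycle `(0 1 2)` in the `S₃` factor (so that `S₃` is generated by the images of
`a` and `b²`) and `b` to the generator of the `C₄` factor. -/
theorem stmt0 :
    ∃ e : PresentedGroup gammaRels ≃* Monoid.PushoutI amalgamMap,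
      e (PresentedGroup.of 0) = Monoid.PushoutI.of (φ := amalgamMap) true c[0, 1, 2] ∧
      e (PresentedGroup.of 1) =
        Monoid.PushoutI.of (φ := amalgamMap) false (Multiplicative.ofAdd (1 : ZMod 4)) := by
  refine ⟨Stmt0.f.toMulEquiv Stmt0.g Stmt0.hgf Stmt0.hfg, ?_, ?_⟩
  · exact Stmt0.f_a
  · exact Stmt0.f_b
end

section
/- Suppose f : Γ → S_L is a homomorphism from Γ = ⟨a, b | a³ = b⁴ = (ab²)² = 1⟩ to a symmetric group on a set L of size n, such that f(ab) is an n-cycle and f(b) fixes some point p ∈ L. Adjoin six new points p₁,…,p₆ to L, and define g(a) = (p₁ p₂ p₃)(p₄ p₅ p₆), g(b) = (p p₁)(p₂ p₄ p₃ p₅) in the symmetric group on L ∪ {p₁,…,p₆}. Then h(a) = f(a)g(a), h(b) = f(b)g(b) extends to a homomorphism h : Γ → S_{L∪{p₁,…,p₆}}, and h(ab) is an (n+6)-cycle. -/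
open Equiv Equiv.Perm

lemma gammaRel_eq_one {r : FreeGroup (Fin 2)} (h : r ∈ gammaRels) :
    (PresentedGroup.mk gammaRels r : PresentedGroup gammaRels) = 1 :=
  (QuotientGroup.eq_one_iff r).mpr (Subgroup.subset_normalClosure h)

/-- Suppose `f : Γ → S_L` is a homomorphism from `Γ = ⟨a, b | a³ = b⁴ = (ab²)² = 1⟩`
to the symmetric group of a finite set `L` with `n` elements, such that `f(ab)` is an
`n`-cycle and `f(b)` fixes a point `p ∈ L`.  Adjoin six new points `p₁, …, p₆`
(the elements of `Fin 6`), and set `g(a) = (p₁ p₂ p₃)(p₄ p₅ p₆)` and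
`g(b) = (p p₁)(p₂ p₄ p₃ p₅)` in the symmetric group of `L ⊕ Fin 6`.  Then
`h(a) = f(a) g(a)`, `h(b) = f(b) g(b)` (with `f(a)`, `f(b)` acting on `L ⊕ Fin 6`
fixing the new points) extends to a homomorphism `h : Γ → S_{L ⊕ Fin 6}`, and
`h(ab)` is an `(n+6)`-cycle. -/
theorem stmt3 (L : Type*) [Fintype L] [DecidableEq L]
    (f : PresentedGroup gammaRels →* Perm L) (p : L)
    (hcyc : (f (PresentedGroup.of 0 * PresentedGroup.of 1)).cycleType = {Fintype.card L})
    (hfix : f (PresentedGroup.of 1) p = p) :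
    let ga : Perm (L ⊕ Fin 6) := Equiv.sumCongr (1 : Perm L) (c[0, 1, 2] * c[3, 4, 5])
    let gb : Perm (L ⊕ Fin 6) :=
      Equiv.swap (Sum.inl p) (Sum.inr 0) * Equiv.sumCongr (1 : Perm L) c[1, 3, 2, 4]
    ∃ h : PresentedGroup gammaRels →* Perm (L ⊕ Fin 6),
      h (PresentedGroup.of 0) =
        Equiv.sumCongr (f (PresentedGroup.of 0)) (1 : Perm (Fin 6)) * ga ∧
      h (PresentedGroup.of 1) =
        Equiv.sumCongr (f (PresentedGroup.of 1)) (1 : Perm (Fin 6)) * gb ∧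
      (h (PresentedGroup.of 0 * PresentedGroup.of 1)).cycleType = {Fintype.card L + 6} := by
  intro ga gb
  set α := f (PresentedGroup.of 0) with hαdef
  set β := f (PresentedGroup.of 1) with hβdef
  set σa : Perm (Fin 6) := c[0, 1, 2] * c[3, 4, 5] with hσa
  set σb : Perm (Fin 6) := c[1, 3, 2, 4] with hσb
  -- the relations in the source group
  have rel1 : (PresentedGroup.of 0 : PresentedGroup gammaRels) ^ 3 = 1 := by
    have := gammaRel_eq_one (r := FreeGroup.of 0 ^ 3) (by simp [gammaRels])
    simpa [map_pow, PresentedGroup.of] using this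
  have rel2 : (PresentedGroup.of 1 : PresentedGroup gammaRels) ^ 4 = 1 := by
    have := gammaRel_eq_one (r := FreeGroup.of 1 ^ 4) (by simp [gammaRels])
    simpa [map_pow, PresentedGroup.of] using this
  have rel3 : ((PresentedGroup.of 0 : PresentedGroup gammaRels) *
      PresentedGroup.of 1 ^ 2) ^ 2 = 1 := by
    have := gammaRel_eq_one (r := (FreeGroup.of 0 * FreeGroup.of 1 ^ 2) ^ 2)
      (by simp [gammaRels])
    simpa [map_pow, map_mul, PresentedGroup.of] using this
  have hα3 : α ^ 3 = 1 := by rw [hαdef, ← map_pow, rel1, map_one]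
  have hβ4 : β ^ 4 = 1 := by rw [hβdef, ← map_pow, rel2, map_one]
  have hr3 : (α * β ^ 2) ^ 2 = 1 := by
    rw [hαdef, hβdef, ← map_pow, ← map_mul, ← map_pow, rel3, map_one]
  have hα3' : ∀ q, α (α (α q)) = q := by
    intro q
    have := DFunLike.congr_fun hα3 q
    simpa [pow_succ, Perm.mul_apply] using this
  have hβ4' : ∀ q, β (β (β (β q))) = q := by
    intro q
    have := DFunLike.congr_fun hβ4 q
    simpa [pow_succ, Perm.mul_apply] using this
  have hr3' : ∀ q, α (β (β (α (β (β q))))) = q := by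
    intro q
    have := DFunLike.congr_fun hr3 q
    simpa [pow_succ, Perm.mul_apply] using this
  set A : Perm (L ⊕ Fin 6) := Equiv.sumCongr α (1 : Perm (Fin 6)) * ga with hAdef
  set B : Perm (L ⊕ Fin 6) := Equiv.sumCongr β (1 : Perm (Fin 6)) * gb with hBdef
  -- pointwise description of A
  have hAl : ∀ q, A (Sum.inl q) = Sum.inl (α q) := by
    intro q; simp [hAdef, ga, Perm.mul_apply]
  have hAr : ∀ j, A (Sum.inr j) = Sum.inr (σa j) := by
    intro j; simp [hAdef, ga, Perm.mul_apply, hσa]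
  -- pointwise description of B
  have hβp : β p = p := hfix
  have hβne : ∀ q, q ≠ p → β q ≠ p := by
    intro q hq h
    exact hq (β.injective (h.trans hβp.symm))
  have hBl : ∀ q, q ≠ p → B (Sum.inl q) = Sum.inl (β q) := by
    intro q hq
    simp [hBdef, gb, Perm.mul_apply, Equiv.swap_apply_of_ne_of_ne,
      (by simpa using hq : (Sum.inl q : L ⊕ Fin 6) ≠ Sum.inl p)]
  have hBp : B (Sum.inl p) = Sum.inr 0 := by
    simp [hBdef, gb, Perm.mul_apply]
  have key0 : σb 0 = 0 := by rw [hσb]; decide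
  have hB0 : B (Sum.inr 0) = Sum.inl p := by
    show (Equiv.sumCongr β (1 : Perm (Fin 6)))
      ((Equiv.swap (Sum.inl p) (Sum.inr 0))
        ((Equiv.sumCongr (1 : Perm L) σb) (Sum.inr 0))) = _
    simp only [Equiv.sumCongr_apply, Sum.map_inr, Sum.map_inl, key0,
      Equiv.swap_apply_right, hβp]
  have hσb0 : ∀ j : Fin 6, j ≠ 0 → σb j ≠ 0 := by rw [hσb]; decide
  have hBr : ∀ j, j ≠ 0 → B (Sum.inr j) = Sum.inr (σb j) := by
    intro j hj
    show (Equiv.sumCongr β (1 : Perm (Fin 6)))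
      ((Equiv.swap (Sum.inl p) (Sum.inr 0))
        ((Equiv.sumCongr (1 : Perm L) σb) (Sum.inr j))) = _
    simp only [Equiv.sumCongr_apply, Sum.map_inr]
    rw [Equiv.swap_apply_of_ne_of_ne (by simp) (by simp [hσb0 j hj])]
    simp
  -- relations for A and B
  have hσa3 : ∀ j, σa (σa (σa j)) = j := by rw [hσa]; decide
  have hA3 : A ^ 3 = 1 := by
    ext x
    cases x with
    | inl q => simp [pow_succ, Perm.mul_apply, hAl, hα3']
    | inr j => simp [pow_succ, Perm.mul_apply, hAr, hσa3]
  have hσb4 : ∀ j, σb (σb (σb (σb j))) = j := by rw [hσb]; decide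
  have hB4 : B ^ 4 = 1 := by
    ext x
    cases x with
    | inl q =>
      by_cases hq : q = p
      · subst hq; simp [pow_succ, Perm.mul_apply, hBp, hB0]
      · simp [pow_succ, Perm.mul_apply, hBl q hq, hBl _ (hβne q hq),
          hBl _ (hβne _ (hβne q hq)), hBl _ (hβne _ (hβne _ (hβne q hq))), hβ4']
    | inr j =>
      by_cases hj : j = 0
      · subst hj; simp [pow_succ, Perm.mul_apply, hB0, hBp]
      · simp [pow_succ, Perm.mul_apply, hBr j hj, hBr _ (hσb0 j hj),
          hBr _ (hσb0 _ (hσb0 j hj)), hBr _ (hσb0 _ (hσb0 _ (hσb0 j hj))), hσb4]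
  set E : Perm (L ⊕ Fin 6) := A * B ^ 2 with hEdef
  have hEl : ∀ q, E (Sum.inl q) = Sum.inl (α (β (β q))) := by
    intro q
    by_cases hq : q = p
    · subst hq; simp [hEdef, pow_two, Perm.mul_apply, hBp, hB0, hAl, hβp]
    · simp [hEdef, pow_two, Perm.mul_apply, hBl q hq, hBl _ (hβne q hq), hAl]
  have hEr : ∀ j, E (Sum.inr j) = Sum.inr (σa (σb (σb j))) := by
    intro j
    by_cases hj : j = 0
    · subst hj; simp [hEdef, pow_two, Perm.mul_apply, hB0, hBp, hAr, key0]
    · simp [hEdef, pow_two, Perm.mul_apply, hBr j hj, hBr _ (hσb0 j hj), hAr]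
  have hτ2 : ∀ j, σa (σb (σb (σa (σb (σb j))))) = j := by rw [hσa, hσb]; decide
  have hAB2 : E ^ 2 = 1 := by
    ext x
    cases x with
    | inl q => simp [pow_two, Perm.mul_apply, hEl, hr3']
    | inr j => simp [pow_two, Perm.mul_apply, hEr, hτ2]
  -- the product C = A * B
  set C : Perm (L ⊕ Fin 6) := A * B with hCdef
  have hCl : ∀ q, q ≠ p → C (Sum.inl q) = Sum.inl (α (β q)) := by
    intro q hq; simp [hCdef, Perm.mul_apply, hBl q hq, hAl]
  have hCp : C (Sum.inl p) = Sum.inr 1 := by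
    simp [hCdef, Perm.mul_apply, hBp, hAr, show σa 0 = 1 from by rw [hσa]; decide]
  have hC0 : C (Sum.inr 0) = Sum.inl (α p) := by
    simp [hCdef, Perm.mul_apply, hB0, hAl]
  have hCr : ∀ j, j ≠ 0 → C (Sum.inr j) = Sum.inr (σa (σb j)) := by
    intro j hj; simp [hCdef, Perm.mul_apply, hBr j hj, hAr]
  have e1 : C (Sum.inr 1) = Sum.inr 4 := by
    rw [hCr 1 (by decide), show σa (σb 1) = 4 from by rw [hσa, hσb]; decide]
  have e4 : C (Sum.inr 4) = Sum.inr 2 := by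
    rw [hCr 4 (by decide), show σa (σb 4) = 2 from by rw [hσa, hσb]; decide]
  have e2 : C (Sum.inr 2) = Sum.inr 5 := by
    rw [hCr 2 (by decide), show σa (σb 2) = 5 from by rw [hσa, hσb]; decide]
  have e5 : C (Sum.inr 5) = Sum.inr 3 := by
    rw [hCr 5 (by decide), show σa (σb 5) = 3 from by rw [hσa, hσb]; decide]
  have e3 : C (Sum.inr 3) = Sum.inr 0 := by
    rw [hCr 3 (by decide), show σa (σb 3) = 0 from by rw [hσa, hσb]; decide]
  -- properties of γ = α * β
  rw [map_mul] at hcyc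
  have hγcyc : (α * β).IsCycle := card_cycleType_eq_one.mp (by rw [hcyc]; simp)
  have hγsupp : (α * β).support = Finset.univ :=
    Finset.eq_univ_of_card _ (by rw [← sum_cycleType, hcyc, Multiset.sum_singleton])
  have hγmove : ∀ q, (α * β) q ≠ q := fun q =>
    mem_support.mp (by rw [hγsupp]; exact Finset.mem_univ q)
  have hγsc : ∀ q r, (α * β).SameCycle q r := fun q r =>
    hγcyc.sameCycle (hγmove q) (hγmove r)
  -- same-cycle statements for C
  have hstep : ∀ q, C.SameCycle (Sum.inl q) (Sum.inl ((α * β) q)) := by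
    intro q
    by_cases hq : q = p
    · subst hq
      refine ⟨7, ?_⟩
      rw [show ((7 : ℤ)) = ((7 : ℕ) : ℤ) from rfl, zpow_natCast]
      simp [pow_succ, Perm.mul_apply, hCp, e1, e4, e2, e5, e3, hC0, hβp]
    · exact ⟨1, by simp [hCl q hq, Perm.mul_apply]⟩
  have hmain : ∀ k : ℤ, C.SameCycle (Sum.inl p) (Sum.inl (((α * β) ^ k) p)) := by
    intro k
    induction k using Int.induction_on with
    | zero => simpa using SameCycle.refl C (Sum.inl p)
    | succ k ih =>
      have h2 := hstep (((α * β) ^ (k : ℤ)) p)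
      have h3 : ((α * β) ^ ((k : ℤ) + 1)) p = (α * β) (((α * β) ^ (k : ℤ)) p) := by
        rw [add_comm, zpow_one_add, Perm.mul_apply]
      rw [h3]; exact ih.trans h2
    | pred k ih =>
      have h2 := hstep (((α * β) ^ (-(k : ℤ) - 1)) p)
      have h3 : ((α * β) ^ (-(k : ℤ))) p = (α * β) (((α * β) ^ (-(k : ℤ) - 1)) p) := by
        rw [show (-(k : ℤ)) = 1 + (-(k : ℤ) - 1) by ring, zpow_one_add, Perm.mul_apply]
        ring_nf
      rw [← h3] at h2
      exact ih.trans h2.symm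
  have hIsC : C.IsCycle := by
    refine ⟨Sum.inl p, by rw [hCp]; simp, fun y hy => ?_⟩
    cases y with
    | inl q =>
      obtain ⟨k, hk⟩ := hγsc p q
      exact hk ▸ hmain k
    | inr j =>
      have pow7 : ∀ n : ℕ, (C ^ ((n : ℕ) : ℤ)) (Sum.inl p) = (C ^ n) (Sum.inl p) := by
        intro n; rw [zpow_natCast]
      fin_cases j
      · exact ⟨6, by rw [show ((6:ℤ)) = ((6:ℕ):ℤ) from rfl, zpow_natCast]; simp [pow_succ, Perm.mul_apply, hCp, e1, e4, e2, e5, e3]⟩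
      · exact ⟨1, by rw [show ((1:ℤ)) = ((1:ℕ):ℤ) from rfl, zpow_natCast]; simp [pow_succ, Perm.mul_apply, hCp]⟩
      · exact ⟨3, by rw [show ((3:ℤ)) = ((3:ℕ):ℤ) from rfl, zpow_natCast]; simp [pow_succ, Perm.mul_apply, hCp, e1, e4]⟩
      · exact ⟨5, by rw [show ((5:ℤ)) = ((5:ℕ):ℤ) from rfl, zpow_natCast]; simp [pow_succ, Perm.mul_apply, hCp, e1, e4, e2, e5]⟩
      · exact ⟨2, by rw [show ((2:ℤ)) = ((2:ℕ):ℤ) from rfl, zpow_natCast]; simp [pow_succ, Perm.mul_apply, hCp, e1]⟩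
      · exact ⟨4, by rw [show ((4:ℤ)) = ((4:ℕ):ℤ) from rfl, zpow_natCast]; simp [pow_succ, Perm.mul_apply, hCp, e1, e4, e2]⟩
  have hsupp : C.support = Finset.univ := by
    apply Finset.eq_univ_iff_forall.mpr
    intro x
    rw [mem_support]
    cases x with
    | inl q =>
      by_cases hq : q = p
      · subst hq; rw [hCp]; simp
      · rw [hCl q hq]
        intro hcontra
        exact hγmove q (by rw [Perm.mul_apply]; simpa using hcontra)
    | inr j =>
      fin_cases j
      · show C (Sum.inr 0) ≠ Sum.inr 0; rw [hC0]; simp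
      · show C (Sum.inr 1) ≠ Sum.inr 1; rw [e1]; simp
      · show C (Sum.inr 2) ≠ Sum.inr 2; rw [e2]; simp
      · show C (Sum.inr 3) ≠ Sum.inr 3; rw [e3]; simp
      · show C (Sum.inr 4) ≠ Sum.inr 4; rw [e4]; simp
      · show C (Sum.inr 5) ≠ Sum.inr 5; rw [e5]; simp
  -- build the homomorphism
  have hrels : ∀ r ∈ gammaRels, FreeGroup.lift ![A, B] r = 1 := by
    intro r hr
    simp only [gammaRels, Set.mem_insert_iff, Set.mem_singleton_iff] at hr
    rcases hr with rfl | rfl | rfl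
    · simp only [map_pow, FreeGroup.lift_apply_of, Matrix.cons_val_zero]
      exact hA3
    · simp only [map_pow, FreeGroup.lift_apply_of, Matrix.cons_val_one, Matrix.head_cons]
      exact hB4
    · simp only [map_pow, map_mul, FreeGroup.lift_apply_of, Matrix.cons_val_zero,
        Matrix.cons_val_one, Matrix.head_cons]
      exact hAB2
  refine ⟨PresentedGroup.toGroup hrels, ?_, ?_, ?_⟩
  · exact PresentedGroup.toGroup.of hrels
  · exact PresentedGroup.toGroup.of hrels
  · rw [map_mul, PresentedGroup.toGroup.of hrels, PresentedGroup.toGroup.of hrels]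
    have : (![A, B] 0 * ![A, B] 1 : Perm (L ⊕ Fin 6)) = C := by
      rw [hCdef]; rfl
    rw [this, hIsC.cycleType, hsupp, Finset.card_univ, Fintype.card_sum, Fintype.card_fin]
end

section
/- Let Γ = A *_C B be an amalgamated free product of finite groups where C is a proper subgroup of both A and B. Then Γ has a finite-index subgroup which is a free group. -/
open Function Equiv

namespace Stmt7Aux

open scoped Classical

variable {C : Type*} [Group C] {D : Type*} [Group D]

/-- Right coset space `(φ.range)\D`, i.e. orbits of left multiplication by the image of `C`. -/
def P (ψ : C →* D) : Type _ := Quotient (QuotientGroup.rightRel ψ.range)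

variable (ψ : C →* D)

def mkP (d : D) : P ψ := Quotient.mk _ d

def p0 : P ψ := mkP ψ 1

noncomputable def rep (p : P ψ) : D :=
  if p = p0 ψ then 1 else Quotient.out p

@[simp] lemma rep_p0 : rep ψ (p0 ψ) = 1 := if_pos rfl

lemma mkP_eq {x y : D} : mkP ψ x = mkP ψ y ↔ y * x⁻¹ ∈ ψ.range := by
  unfold mkP
  exact Quotient.eq.trans QuotientGroup.rightRel_apply

lemma mkP_rep (p : P ψ) : mkP ψ (rep ψ p) = p := by
  by_cases h : p = p0 ψ
  · subst h; simp [rep, p0]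
  · simp only [rep, h, if_false, mkP]; exact Quotient.out_eq p

variable (hψ : Injective ψ)

noncomputable def E : C × P ψ ≃ D :=
  Equiv.ofBijective (fun cp => ψ cp.1 * rep ψ cp.2) (by
    constructor
    · rintro ⟨c, p⟩ ⟨c', p'⟩ h
      simp only at h
      have hp : p = p' := by
        rw [← mkP_rep ψ p, ← mkP_rep ψ p']
        rw [mkP_eq]
        refine ⟨c'⁻¹ * c, ?_⟩
        have : rep ψ p' = ψ c'⁻¹ * (ψ c * rep ψ p) := by
          rw [h]; simp [← mul_assoc]
        simp [this, map_mul, mul_assoc]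
      subst hp
      have hc : c = c' := hψ (by
        have := mul_right_cancel h; exact this)
      simp [hc]
    · intro d
      refine ⟨(?_, mkP ψ d), ?_⟩
      · have h : mkP ψ (rep ψ (mkP ψ d)) = mkP ψ d := mkP_rep ψ _
        have h2 : d * (rep ψ (mkP ψ d))⁻¹ ∈ ψ.range := (mkP_eq ψ).mp h
        exact h2.choose
      · simp only
        have h : mkP ψ (rep ψ (mkP ψ d)) = mkP ψ d := mkP_rep ψ _
        have h2 : d * (rep ψ (mkP ψ d))⁻¹ ∈ ψ.range := (mkP_eq ψ).mp h
        have := h2.choose_spec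
        rw [this]
        simp)

lemma E_apply (c : C) (p : P ψ) : E ψ hψ (c, p) = ψ c * rep ψ p := rfl

@[simp] lemma E_one (p : P ψ) : E ψ hψ (1, p) = rep ψ p := by simp [E_apply]

@[simp] lemma E_one_p0 : E ψ hψ (1, p0 ψ) = 1 := by simp

/-- Left multiplication action of `D` on `C × P ψ` transported through `E`. -/
noncomputable def rho : D →* Equiv.Perm (C × P ψ) where
  toFun d := (E ψ hψ).symm.permCongr (Equiv.mulLeft d)
  map_one' := by ext x <;> simp
  map_mul' d₁ d₂ := by
    ext x
    · simp [mul_assoc]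
    · simp [mul_assoc]

lemma rho_apply (d : D) (x : C × P ψ) :
    rho ψ hψ d x = (E ψ hψ).symm (d * E ψ hψ x) := by
  simp [rho, Equiv.permCongr_apply]

lemma E_rho (d : D) (x : C × P ψ) :
    E ψ hψ (rho ψ hψ d x) = d * E ψ hψ x := by
  rw [rho_apply, Equiv.apply_symm_apply]

lemma rho_base (c c₀ : C) (p : P ψ) :
    rho ψ hψ (ψ c) (c₀, p) = (c * c₀, p) := by
  apply (E ψ hψ).injective
  rw [E_rho]
  simp [E_apply, map_mul, mul_assoc]

lemma rho_rep (p : P ψ) : rho ψ hψ (rep ψ p) (1, p0 ψ) = (1, p) := by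
  apply (E ψ hψ).injective
  rw [E_rho]
  simp

lemma rho_rep_inv (p : P ψ) : rho ψ hψ (rep ψ p)⁻¹ (1, p) = (1, p0 ψ) := by
  apply (E ψ hψ).injective
  rw [E_rho]
  simp

instance [Finite D] : Finite (P ψ) := Quotient.finite _

end Stmt7Aux
open Function Equiv

namespace Stmt7Aux2

/-- Permutations of the first factor of a product. -/
def permFstHom (α β : Type*) : Equiv.Perm α →* Equiv.Perm (α × β) where
  toFun σ := σ.prodCongr (Equiv.refl β)
  map_one' := by ext x <;> simp
  map_mul' σ τ := by ext x <;> simp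

@[simp] lemma permFstHom_apply {α β : Type*} (σ : Equiv.Perm α) (x : α × β) :
    permFstHom α β σ x = (σ x.1, x.2) := rfl

/-- Conjugation of permutations by an equivalence, as a monoid hom. -/
def permCongrHom {α β : Type*} (e : α ≃ β) : Equiv.Perm α →* Equiv.Perm β where
  toFun σ := e.permCongr σ
  map_one' := by ext x <;> simp
  map_mul' σ τ := by ext x <;> simp

@[simp] lemma permCongrHom_apply {α β : Type*} (e : α ≃ β) (σ : Equiv.Perm α) (x : β) :
    permCongrHom e σ x = e (σ (e.symm x)) := rfl

def shuffle (α β γ : Type*) : (α × β) × γ ≃ (α × γ) × β where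
  toFun x := ((x.1.1, x.2), x.1.2)
  invFun x := ((x.1.1, x.2), x.1.2)
  left_inv _ := rfl
  right_inv _ := rfl

end Stmt7Aux2

namespace Stmt7Cocycle

lemma mulAutArrow_apply' {G A M : Type*} [Group G] [MulAction G A] [Monoid M]
    (g : G) (F : A → M) (a : A) : mulAutArrow g F a = F (g⁻¹ • a) := rfl

section
variable {M Ωt X : Type*} [Group M] [Group X] (ρ : M →* Equiv.Perm Ωt) (σ : Ωt → X)

/-- The coboundary twist of the homomorphism `ρ` into `(Ωt → X) ⋊ Perm Ωt`. -/
def cobHom : M →* (Ωt → X) ⋊[mulAutArrow] Equiv.Perm Ωt where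
  toFun m := ⟨fun ω => (σ ω)⁻¹ * σ ((ρ m)⁻¹ ω), ρ m⟩
  map_one' := by
    refine SemidirectProduct.ext ?_ ?_ <;> simp
    rfl
  map_mul' m₁ m₂ := by
    refine SemidirectProduct.ext ?_ ?_
    · funext ω
      simp [-mulAutArrow_apply_apply, SemidirectProduct.mul_left, MulAut.smul_def,
        mulAutArrow_apply', mul_assoc, Equiv.Perm.smul_def, Equiv.Perm.mul_apply]
    · simp [SemidirectProduct.mul_right]

@[simp] lemma cobHom_left (m : M) (ω : Ωt) :
    (cobHom ρ σ m).left ω = (σ ω)⁻¹ * σ ((ρ m)⁻¹ ω) := rfl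

@[simp] lemma cobHom_right (m : M) : (cobHom ρ σ m).right = ρ m := rfl

lemma sd_left_mul (w₁ w₂ : (Ωt → X) ⋊[mulAutArrow] Equiv.Perm Ωt) (ω : Ωt) :
    (w₁ * w₂).left ω = w₁.left ω * w₂.left ((w₁.right)⁻¹ ω) := by
  simp [-mulAutArrow_apply_apply, SemidirectProduct.mul_left, MulAut.smul_def,
    mulAutArrow_apply', Equiv.Perm.smul_def]

end

end Stmt7Cocycle

namespace Stmt7Main
open Stmt7Cocycle
open scoped Classical

open Stmt7Aux Stmt7Aux2 Monoid PushoutI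

variable {C : Type*} [Group C] {G : Bool → Type*} [∀ i, Group (G i)]
  (φ : ∀ i, C →* G i) (hinj : ∀ i, Function.Injective (φ i))

/-- The finite `Γ`-set. -/
abbrev Om := (C × P (φ true)) × P (φ false)

noncomputable def rhoA : G true →* Equiv.Perm (Om φ) :=
  (permFstHom (C × P (φ true)) (P (φ false))).comp (rho (φ true) (hinj true))

noncomputable def rhoB : G false →* Equiv.Perm (Om φ) :=
  ((Stmt7Aux2.permCongrHom (shuffle C (P (φ true)) (P (φ false))).symm).comp
    (permFstHom (C × P (φ false)) (P (φ true)))).comp (rho (φ false) (hinj false))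

lemma rhoA_apply (a : G true) (c : C) (p : P (φ true)) (q : P (φ false)) :
    rhoA φ hinj a ((c, p), q) = (rho (φ true) (hinj true) a (c, p), q) := rfl

lemma rhoB_apply (b : G false) (c : C) (p : P (φ true)) (q : P (φ false)) :
    rhoB φ hinj b ((c, p), q) =
      (((rho (φ false) (hinj false) b (c, q)).1, p),
        (rho (φ false) (hinj false) b (c, q)).2) := rfl

noncomputable def fam : ∀ i, G i →* Equiv.Perm (Om φ) := fun i =>
  match i with
  | true => rhoA φ hinj
  | false => rhoB φ hinj

lemma compat : ∀ i, (fam φ hinj i).comp (φ i) = (rhoA φ hinj).comp (φ true) := by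
  intro i
  cases i
  · refine MonoidHom.ext fun c => Equiv.ext fun ω => ?_
    obtain ⟨⟨c₀, p⟩, q⟩ := ω
    show rhoB φ hinj (φ false c) _ = rhoA φ hinj (φ true c) _
    rw [rhoB_apply, rhoA_apply, rho_base, rho_base]
  · rfl

/-- The action homomorphism `Γ →* Perm Ω`. -/
noncomputable def bigF : PushoutI φ →* Equiv.Perm (Om φ) :=
  PushoutI.lift (fam φ hinj) ((rhoA φ hinj).comp (φ true)) (compat φ hinj)

lemma bigF_of (i : Bool) (g : G i) : bigF φ hinj (of i g) = fam φ hinj i g :=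
  PushoutI.lift_of _ _ _ _

lemma act_A (a : G true) (c : C) (p : P (φ true)) (q : P (φ false)) :
    bigF φ hinj (of true a) ((c, p), q) = (rho (φ true) (hinj true) a (c, p), q) := by
  rw [bigF_of]; rfl

lemma act_B (b : G false) (c : C) (p : P (φ true)) (q : P (φ false)) :
    bigF φ hinj (of false b) ((c, p), q) =
      (((rho (φ false) (hinj false) b (c, q)).1, p),
        (rho (φ false) (hinj false) b (c, q)).2) := by
  rw [bigF_of]; rfl

/-- Base point. -/
def x0 : Om φ := ((1, p0 (φ true)), p0 (φ false))

/-- The finite-index subgroup: stabilizer of the base point. -/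
noncomputable def HH : Subgroup (PushoutI φ) :=
  (MulAction.stabilizer (Equiv.Perm (Om φ)) (x0 φ)).comap (bigF φ hinj)

lemma mem_HH {γ : PushoutI φ} : γ ∈ HH φ hinj ↔ bigF φ hinj γ (x0 φ) = x0 φ := by
  simp [HH, MulAction.mem_stabilizer_iff, Equiv.Perm.smul_def]

lemma ker_le_HH : (bigF φ hinj).ker ≤ HH φ hinj := by
  intro γ hγ
  rw [MonoidHom.mem_ker] at hγ
  rw [mem_HH, hγ]
  rfl

lemma HH_finiteIndex [∀ i, Finite (G i)] : (HH φ hinj).FiniteIndex := by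
  have : Finite C := Finite.of_injective _ (hinj true)
  have : Finite (Om φ) := by infer_instance
  have : (bigF φ hinj).ker.FiniteIndex := Subgroup.finiteIndex_ker _
  exact Subgroup.finiteIndex_of_le (ker_le_HH φ hinj)

/-- `X p` : image in `Γ` of the coset representative `a_p`. -/
noncomputable def XX (p : P (φ true)) : PushoutI φ := of true (rep (φ true) p)

noncomputable def YY (q : P (φ false)) : PushoutI φ := of false (rep (φ false) q)

/-- Candidate free generators: commutators of coset representatives. -/
noncomputable def gel (p : P (φ true)) (q : P (φ false)) : PushoutI φ :=
  (XX φ p)⁻¹ * (YY φ q)⁻¹ * XX φ p * YY φ q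

@[simp] lemma XX_p0 : XX φ (p0 (φ true)) = 1 := by simp [XX]

@[simp] lemma YY_p0 : YY φ (p0 (φ false)) = 1 := by simp [YY]

lemma gel_p0_left (q : P (φ false)) : gel φ (p0 (φ true)) q = 1 := by
  simp [gel]

lemma gel_p0_right (p : P (φ true)) : gel φ p (p0 (φ false)) = 1 := by
  simp [gel]

/-- Schreier transversal map. -/
noncomputable def tau (ω : Om φ) : PushoutI φ :=
  of true (E (φ true) (hinj true) ω.1) * of false (rep (φ false) ω.2)

@[simp] lemma tau_x0 : tau φ hinj (x0 φ) = 1 := by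
  simp [tau, x0]

/-- The subgroup generated by the candidate generators. -/
noncomputable def ZZ : Subgroup (PushoutI φ) :=
  Subgroup.closure (Set.range fun pq : P (φ true) × P (φ false) => gel φ pq.1 pq.2)

lemma gel_mem_ZZ (p : P (φ true)) (q : P (φ false)) : gel φ p q ∈ ZZ φ :=
  Subgroup.subset_closure ⟨(p, q), rfl⟩

/-- Key Schreier computation. -/
lemma schreier (γ : PushoutI φ) (ω : Om φ) :
    (tau φ hinj (bigF φ hinj γ ω))⁻¹ * γ * tau φ hinj ω ∈ ZZ φ := by
  induction γ using PushoutI.induction_on generalizing ω with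
  | of i g =>
    cases i with
    | true =>
      obtain ⟨⟨c, p⟩, q⟩ := ω
      have h : (tau φ hinj (bigF φ hinj (of true g) ((c, p), q)))⁻¹ * of true g *
          tau φ hinj ((c, p), q) = 1 := by
        rw [act_A]
        show (of true (E (φ true) (hinj true) (rho (φ true) (hinj true) g (c, p))) *
            of false (rep (φ false) q))⁻¹ * of true g *
            (of true (E (φ true) (hinj true) (c, p)) * of false (rep (φ false) q)) = 1
        rw [E_rho, map_mul]
        group
      rw [h]
      exact one_mem _
    | false =>
      obtain ⟨⟨c, p⟩, q⟩ := ω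
      set r := rho (φ false) (hinj false) g (c, q) with hr
      have key : φ false r.1 * rep (φ false) r.2 = g * (φ false c * rep (φ false) q) := by
        have h := E_rho (φ false) (hinj false) g (c, q)
        rw [E_apply, E_apply] at h
        rw [← hr] at h
        exact h
      have hg : of false g = base φ r.1 * YY φ r.2 * (YY φ q)⁻¹ * (base φ c)⁻¹ := by
        have := congrArg (of (φ := φ) false) key
        simp only [map_mul] at this
        rw [of_apply_eq_base, of_apply_eq_base] at this
        rw [YY, YY, eq_mul_inv_iff_mul_eq, eq_mul_inv_iff_mul_eq, mul_assoc]
        exact this.symm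
      have h : (tau φ hinj (bigF φ hinj (of false g) ((c, p), q)))⁻¹ * of false g *
          tau φ hinj ((c, p), q) = (gel φ p r.2)⁻¹ * gel φ p q := by
        rw [act_B, ← hr]
        show (of true (E (φ true) (hinj true) (r.1, p)) * of false (rep (φ false) r.2))⁻¹ *
            of false g *
            (of true (E (φ true) (hinj true) (c, p)) * of false (rep (φ false) q)) = _
        rw [E_apply, E_apply, map_mul, map_mul, of_apply_eq_base, of_apply_eq_base, hg]
        show _ = ((XX φ p)⁻¹ * (YY φ r.2)⁻¹ * XX φ p * YY φ r.2)⁻¹ *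
          ((XX φ p)⁻¹ * (YY φ q)⁻¹ * XX φ p * YY φ q)
        rw [show of (φ := φ) true (rep (φ true) p) = XX φ p from rfl,
          show of (φ := φ) false (rep (φ false) r.2) = YY φ r.2 from rfl,
          show of (φ := φ) false (rep (φ false) q) = YY φ q from rfl]
        group
      rw [h]
      exact mul_mem (inv_mem (gel_mem_ZZ φ p r.2)) (gel_mem_ZZ φ p q)
  | base c =>
    rw [← of_apply_eq_base φ true c]
    -- same as the `of true` case
    obtain ⟨⟨c₀, p⟩, q⟩ := ω
    have h : (tau φ hinj (bigF φ hinj (of true (φ true c)) ((c₀, p), q)))⁻¹ *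
        of true (φ true c) * tau φ hinj ((c₀, p), q) = 1 := by
      rw [act_A]
      show (of true (E (φ true) (hinj true) (rho (φ true) (hinj true) (φ true c) (c₀, p))) *
          of false (rep (φ false) q))⁻¹ * of true (φ true c) *
          (of true (E (φ true) (hinj true) (c₀, p)) * of false (rep (φ false) q)) = 1
      rw [E_rho, map_mul]
      group
    rw [h]
    exact one_mem _
  | mul x y hx hy =>
    have h : (tau φ hinj (bigF φ hinj (x * y) ω))⁻¹ * (x * y) * tau φ hinj ω =
        ((tau φ hinj (bigF φ hinj x (bigF φ hinj y ω)))⁻¹ * x *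
          tau φ hinj (bigF φ hinj y ω)) *
        ((tau φ hinj (bigF φ hinj y ω))⁻¹ * y * tau φ hinj ω) := by
      rw [map_mul, Equiv.Perm.mul_apply]
      group
    rw [h]
    exact mul_mem (hx _) (hy _)

lemma act_XX (p : P (φ true)) (q : P (φ false)) :
    bigF φ hinj (XX φ p) ((1, p0 (φ true)), q) = ((1, p), q) := by
  rw [XX, act_A, rho_rep]

lemma act_XX_inv (p : P (φ true)) (q : P (φ false)) :
    bigF φ hinj (XX φ p)⁻¹ ((1, p), q) = ((1, p0 (φ true)), q) := by
  rw [XX, show (of (φ := φ) true (rep (φ true) p))⁻¹ = of (φ := φ) true (rep (φ true) p)⁻¹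
    from (map_inv _ _).symm, act_A, rho_rep_inv]

lemma act_YY (p : P (φ true)) (q : P (φ false)) :
    bigF φ hinj (YY φ q) ((1, p), p0 (φ false)) = ((1, p), q) := by
  rw [YY, act_B, rho_rep]

lemma act_YY_inv (p : P (φ true)) (q : P (φ false)) :
    bigF φ hinj (YY φ q)⁻¹ ((1, p), q) = ((1, p), p0 (φ false)) := by
  rw [YY, show (of (φ := φ) false (rep (φ false) q))⁻¹ = of (φ := φ) false (rep (φ false) q)⁻¹
    from (map_inv _ _).symm, act_B, rho_rep_inv]

lemma gel_mem_HH (p : P (φ true)) (q : P (φ false)) : gel φ p q ∈ HH φ hinj := by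
  rw [mem_HH, gel]
  simp only [map_mul, Equiv.Perm.mul_apply, x0]
  rw [act_YY, act_XX, act_YY_inv, act_XX_inv]

lemma ZZ_le_HH : ZZ φ ≤ HH φ hinj := by
  rw [ZZ, Subgroup.closure_le]
  rintro _ ⟨⟨p, q⟩, rfl⟩
  exact gel_mem_HH φ hinj p q

lemma mem_ZZ_of_mem_HH {γ : PushoutI φ} (hγ : γ ∈ HH φ hinj) : γ ∈ ZZ φ := by
  have h := schreier φ hinj γ (x0 φ)
  rw [mem_HH] at hγ
  rw [hγ, tau_x0] at h
  simpa using h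

/-- The basis type. -/
def Bas : Type _ :=
  {p : P (φ true) // p ≠ p0 (φ true)} × {q : P (φ false) // q ≠ p0 (φ false)}

section Lift

variable {X : Type*} [Group X] (fl : Bas φ → X)

noncomputable def fhat (p : P (φ true)) (q : P (φ false)) : X :=
  if h : p ≠ p0 (φ true) ∧ q ≠ p0 (φ false) then fl (⟨p, h.1⟩, ⟨q, h.2⟩) else 1

@[simp] lemma fhat_p0_left (q : P (φ false)) : fhat φ fl (p0 (φ true)) q = 1 := by
  simp [fhat]

@[simp] lemma fhat_p0_right (p : P (φ true)) : fhat φ fl p (p0 (φ false)) = 1 := by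
  simp [fhat]

lemma fhat_ne (p : P (φ true)) (q : P (φ false)) (hp : p ≠ p0 (φ true))
    (hq : q ≠ p0 (φ false)) : fhat φ fl p q = fl (⟨p, hp⟩, ⟨q, hq⟩) := by
  simp [fhat, hp, hq]

noncomputable def sigB : Om φ → X := fun ω => fhat φ fl ω.1.2 ω.2

noncomputable def famW : ∀ i, G i →*
    (Om φ → X) ⋊[mulAutArrow] Equiv.Perm (Om φ) := fun i =>
  match i with
  | true => SemidirectProduct.inr.comp (rhoA φ hinj)
  | false => cobHom (rhoB φ hinj) (sigB φ fl)

lemma compatW : ∀ i, (famW φ hinj fl i).comp (φ i) =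
    SemidirectProduct.inr.comp ((rhoA φ hinj).comp (φ true)) := by
  intro i
  cases i
  · refine MonoidHom.ext fun c => SemidirectProduct.ext ?_ ?_
    · funext ω
      obtain ⟨⟨c₀, p⟩, q⟩ := ω
      show (sigB φ fl _)⁻¹ * sigB φ fl ((rhoB φ hinj (φ false c))⁻¹ _) = 1
      rw [show (rhoB φ hinj (φ false c))⁻¹ = rhoB φ hinj ((φ false) c⁻¹) by
        rw [map_inv, map_inv]]
      rw [rhoB_apply, rho_base]
      simp [sigB]
    · show rhoB φ hinj (φ false c) = rhoA φ hinj (φ true c)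
      exact DFunLike.congr_fun (compat φ hinj false) c
  · rfl

noncomputable def PhiW : PushoutI φ →*
    (Om φ → X) ⋊[mulAutArrow] Equiv.Perm (Om φ) :=
  PushoutI.lift (famW φ hinj fl) (SemidirectProduct.inr.comp ((rhoA φ hinj).comp (φ true)))
    (compatW φ hinj fl)

lemma PhiW_of (i : Bool) (g : G i) : PhiW φ hinj fl (of i g) = famW φ hinj fl i g :=
  PushoutI.lift_of _ _ _ _

lemma right_PhiW (γ : PushoutI φ) :
    (PhiW φ hinj fl γ).right = bigF φ hinj γ := by
  have h : SemidirectProduct.rightHom.comp (PhiW φ hinj fl) = bigF φ hinj := by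
    apply PushoutI.hom_ext_nonempty
    intro i
    refine MonoidHom.ext fun g => ?_
    show SemidirectProduct.rightHom (PhiW φ hinj fl (of i g)) = bigF φ hinj (of i g)
    rw [PhiW_of, bigF_of]
    cases i
    · rfl
    · show SemidirectProduct.rightHom (SemidirectProduct.inr _) = _
      rw [SemidirectProduct.rightHom_inr]
      rfl
  exact DFunLike.congr_fun h γ

/-- The lifted homomorphism on the stabilizer subgroup. -/
noncomputable def FF : HH φ hinj →* X where
  toFun h := (PhiW φ hinj fl (h : PushoutI φ)).left (x0 φ)
  map_one' := by simp
  map_mul' h₁ h₂ := by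
    show (PhiW φ hinj fl ((h₁ : PushoutI φ) * (h₂ : PushoutI φ))).left (x0 φ) = _
    rw [map_mul, sd_left_mul, right_PhiW]
    congr 1
    have hst : bigF φ hinj (h₁ : PushoutI φ) (x0 φ) = x0 φ := (mem_HH φ hinj).mp h₁.2
    have : (bigF φ hinj (h₁ : PushoutI φ))⁻¹ (x0 φ) = x0 φ := by
      rw [show ((bigF φ hinj (h₁ : PushoutI φ))⁻¹ : Equiv.Perm (Om φ)) =
        (bigF φ hinj (h₁ : PushoutI φ)).symm from rfl, Equiv.symm_apply_eq, hst]
    rw [this]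

lemma Lmul (γ₁ γ₂ : PushoutI φ) (ω : Om φ) :
    (PhiW φ hinj fl (γ₁ * γ₂)).left ω =
      (PhiW φ hinj fl γ₁).left ω *
        (PhiW φ hinj fl γ₂).left ((bigF φ hinj γ₁)⁻¹ ω) := by
  rw [map_mul, sd_left_mul, right_PhiW]

lemma PhiW_XX (p : P (φ true)) :
    PhiW φ hinj fl (XX φ p) = SemidirectProduct.inr (rhoA φ hinj (rep (φ true) p)) :=
  PhiW_of φ hinj fl true _

lemma PhiW_XX_inv (p : P (φ true)) :
    PhiW φ hinj fl (XX φ p)⁻¹ =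
      SemidirectProduct.inr ((rhoA φ hinj (rep (φ true) p))⁻¹) := by
  rw [map_inv, PhiW_XX, ← map_inv]

lemma PhiW_YY (q : P (φ false)) :
    PhiW φ hinj fl (YY φ q) = cobHom (rhoB φ hinj) (sigB φ fl) (rep (φ false) q) :=
  PhiW_of φ hinj fl false _

lemma PhiW_YY_inv (q : P (φ false)) :
    PhiW φ hinj fl (YY φ q)⁻¹ =
      cobHom (rhoB φ hinj) (sigB φ fl) ((rep (φ false) q)⁻¹) := by
  rw [map_inv, PhiW_YY, ← map_inv]

lemma FF_gel (p : P (φ true)) (q : P (φ false)) (hp : p ≠ p0 (φ true))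
    (hq : q ≠ p0 (φ false)) :
    (PhiW φ hinj fl (gel φ p q)).left (x0 φ) = fl (⟨p, hp⟩, ⟨q, hq⟩) := by
  have hP1 : (bigF φ hinj (XX φ p)⁻¹)⁻¹ (x0 φ) = ((1, p), p0 (φ false)) := by
    rw [← map_inv, inv_inv]
    exact act_XX φ hinj p (p0 (φ false))
  have hP2 : (bigF φ hinj ((XX φ p)⁻¹ * (YY φ q)⁻¹))⁻¹ (x0 φ) = ((1, p), q) := by
    rw [← map_inv, mul_inv_rev, inv_inv, inv_inv, map_mul, Equiv.Perm.mul_apply]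
    rw [show bigF φ hinj (XX φ p) (x0 φ) = ((1, p), p0 (φ false)) from
      act_XX φ hinj p (p0 (φ false))]
    exact act_YY φ hinj p q
  have hP3 : (bigF φ hinj ((XX φ p)⁻¹ * (YY φ q)⁻¹ * XX φ p))⁻¹ (x0 φ) =
      ((1, p0 (φ true)), q) := by
    rw [← map_inv, mul_inv_rev, mul_inv_rev, inv_inv, inv_inv, map_mul, map_mul,
      Equiv.Perm.mul_apply, Equiv.Perm.mul_apply]
    rw [show bigF φ hinj (XX φ p) (x0 φ) = ((1, p), p0 (φ false)) from
      act_XX φ hinj p (p0 (φ false))]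
    rw [act_YY]
    exact act_XX_inv φ hinj p q
  rw [gel, Lmul, Lmul, Lmul, hP1, hP2, hP3]
  rw [PhiW_XX_inv, PhiW_XX, PhiW_YY, PhiW_YY_inv]
  rw [SemidirectProduct.left_inr, SemidirectProduct.left_inr]
  rw [cobHom_left, cobHom_left]
  rw [show (rhoB φ hinj ((rep (φ false) q)⁻¹))⁻¹ = rhoB φ hinj (rep (φ false) q) by
    rw [← map_inv, inv_inv]]
  rw [show (rhoB φ hinj (rep (φ false) q))⁻¹ = rhoB φ hinj ((rep (φ false) q)⁻¹) by
    rw [← map_inv]]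
  rw [rhoB_apply, rhoB_apply, rho_rep, rho_rep_inv]
  show (1 : X) * ((sigB φ fl ((1, p), p0 (φ false)))⁻¹ * sigB φ fl ((1, p), q)) * 1 *
    ((sigB φ fl ((1, p0 (φ true)), q))⁻¹ * sigB φ fl ((1, p0 (φ true)), p0 (φ false))) = _
  show (1 : X) * ((fhat φ fl p (p0 (φ false)))⁻¹ * fhat φ fl p q) * 1 *
    ((fhat φ fl (p0 (φ true)) q)⁻¹ * fhat φ fl (p0 (φ true)) (p0 (φ false))) = _
  rw [fhat_p0_left, fhat_p0_right, fhat_p0_right, fhat_ne φ fl p q hp hq]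
  simp

end Lift

noncomputable def ofS (s : Bas φ) : HH φ hinj :=
  ⟨gel φ s.1.1 s.2.1, gel_mem_HH φ hinj _ _⟩

lemma mem_closure_basis (h : HH φ hinj) :
    h ∈ Subgroup.closure (Set.range (ofS φ hinj)) := by
  obtain ⟨x, hx⟩ := h
  have hZ : x ∈ ZZ φ := mem_ZZ_of_mem_HH φ hinj hx
  revert hx
  have main : ∀ hH : x ∈ HH φ hinj,
      (⟨x, hH⟩ : HH φ hinj) ∈ Subgroup.closure (Set.range (ofS φ hinj)) := by
    induction hZ using Subgroup.closure_induction with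
    | mem y hy =>
      obtain ⟨⟨p, q⟩, rfl⟩ := hy
      intro hH
      by_cases hp : p = p0 (φ true)
      · have h1 : (⟨gel φ p q, hH⟩ : HH φ hinj) = 1 :=
          Subtype.ext (by subst hp; exact gel_p0_left φ q)
        rw [h1]; exact one_mem _
      by_cases hq : q = p0 (φ false)
      · have h1 : (⟨gel φ p q, hH⟩ : HH φ hinj) = 1 :=
          Subtype.ext (by subst hq; exact gel_p0_right φ p)
        rw [h1]; exact one_mem _
      · have h1 : (⟨gel φ p q, hH⟩ : HH φ hinj) = ofS φ hinj (⟨p, hp⟩, ⟨q, hq⟩) :=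
          Subtype.ext rfl
        rw [h1]
        exact Subgroup.subset_closure ⟨_, rfl⟩
    | one =>
      intro hH
      have h1 : (⟨(1 : PushoutI φ), hH⟩ : HH φ hinj) = 1 := Subtype.ext rfl
      rw [h1]; exact one_mem _
    | mul a b ha hb iha ihb =>
      intro hH
      have haH : a ∈ HH φ hinj := ZZ_le_HH φ hinj ha
      have hbH : b ∈ HH φ hinj := ZZ_le_HH φ hinj hb
      have h1 : (⟨a * b, hH⟩ : HH φ hinj) = ⟨a, haH⟩ * ⟨b, hbH⟩ := Subtype.ext rfl
      rw [h1]
      exact mul_mem (iha haH) (ihb hbH)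
    | inv a ha iha =>
      intro hH
      have haH : a ∈ HH φ hinj := ZZ_le_HH φ hinj ha
      have h1 : (⟨a⁻¹, hH⟩ : HH φ hinj) = (⟨a, haH⟩)⁻¹ := Subtype.ext rfl
      rw [h1]
      exact inv_mem (iha haH)
  exact main

lemma isFree : IsFreeGroup (HH φ hinj) := by
  apply IsFreeGroup.ofUniqueLift (ULift (Bas φ))
    (fun s => ofS φ hinj s.down)
  intro X _ fl
  refine ⟨FF φ hinj (fun b => fl ⟨b⟩), ?_, ?_⟩
  · rintro ⟨⟨⟨p, hp⟩, ⟨q, hq⟩⟩⟩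
    exact FF_gel φ hinj (fun b => fl ⟨b⟩) p q hp hq
  · intro F' hF'
    refine MonoidHom.ext fun h => ?_
    have hmem := mem_closure_basis φ hinj h
    induction hmem using Subgroup.closure_induction with
    | mem y hy =>
      obtain ⟨s, rfl⟩ := hy
      rw [hF' ⟨s⟩]
      obtain ⟨⟨p, hp⟩, ⟨q, hq⟩⟩ := s
      exact (FF_gel φ hinj (fun b => fl ⟨b⟩) p q hp hq).symm
    | one => rw [map_one, map_one]
    | mul a b _ _ iha ihb => rw [map_mul, map_mul, iha, ihb]
    | inv a _ iha => rw [map_inv, map_inv, iha]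

end Stmt7Main

/-- Let `Γ = A *_C B` be an amalgamated free product of finite groups
(formalized as the pushout of an injective family `φ i : C →* G i` indexed by
`Bool`, with `A = G true` and `B = G false`), where `C` is a proper subgroup of
both factors.  Then `Γ` has a finite-index subgroup which is a free group. -/
theorem stmt7 {C : Type*} [Group C] {G : Bool → Type*} [∀ i, Group (G i)]
    [∀ i, Finite (G i)] (φ : ∀ i, C →* G i)
    (hinj : ∀ i, Function.Injective (φ i))
    (hproper : ∀ i, (φ i).range ≠ ⊤) :
    ∃ H : Subgroup (Monoid.PushoutI φ), H.FiniteIndex ∧ IsFreeGroup H := by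
  classical
  exact ⟨Stmt7Main.HH φ hinj, Stmt7Main.HH_finiteIndex φ hinj, Stmt7Main.isFree φ hinj⟩
end
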